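/- Let H be an r-uniform hypergraph, let C' = v_1, e_1, v_2, …, v_c, e_c, v_1 be a Berge cycle of maximum length in H, let u ∈ V(H) − V(C'), and let W be a (u,C')-expanding set. Then u is contained in at most one edge of {e_j : v_j ∈ W} and in at most one edge of {e_{j−1} : v_j ∈ W} (indices modulo c). Moreover, suppose v_j ∈ W and u ∈ e_j; then for every v_i ∈ W − {v_j} and every Berge path R(v_i, v_j) witnessing the expanding property, if an edge e ∈ E(H) − E(C') − E(R(v_i, v_j)) contains u, then v_{i+1} ∉ e; similarly, if u ∈ e_{j−1}, then v_{i−1} ∉ e. -/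

import Mathlib

/-- A hypergraph on vertex type `α`: a finite vertex set together with a family of
distinct subsets of it, called edges. -/
structure Hypergraph' (α : Type*) [DecidableEq α] where
  verts : Finset α
  edges : Finset (Finset α)
  edge_sub : ∀ e ∈ edges, e ⊆ verts

/-- A simple graph is 2-connected if it has at least 3 vertices, is connected, and
remains connected after deleting any single vertex. -/
def IsTwoConnectedGraph {V : Type*} (G : SimpleGraph V) : Prop :=
  3 ≤ Nat.card V ∧ G.Connected ∧
    ∀ x : V, ((⊤ : G.Subgraph).deleteVerts {x}).coe.Connected

namespace Hypergraph'

variable {α : Type*} [DecidableEq α]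

/-- `H` is `r`-uniform: each edge has exactly `r` vertices. -/
def Uniform (H : Hypergraph' α) (r : ℕ) : Prop := ∀ e ∈ H.edges, e.card = r

/-- The degree of a vertex: the number of edges containing it. -/
def degree (H : Hypergraph' α) (v : α) : ℕ := (H.edges.filter (fun e => v ∈ e)).card

/-- The minimum degree of `H` is at least `k`. -/
def MinDegreeGE (H : Hypergraph' α) (k : ℕ) : Prop := ∀ v ∈ H.verts, k ≤ H.degree v

/-- The vertex type of the incidence graph of `H`: vertices of `H` together with
edges of `H`. -/
def IncVert (H : Hypergraph' α) : Type _ :=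
  {x : α ⊕ Finset α // Sum.elim (fun v => v ∈ H.verts) (fun e => e ∈ H.edges) x}

/-- The incidence (bipartite) graph of `H`: `v ∈ V(H)` is adjacent to `e ∈ E(H)`
iff `v ∈ e`. -/
def incidenceGraph (H : Hypergraph' α) : SimpleGraph (IncVert H) where
  Adj x y := (∃ v e, x.1 = Sum.inl v ∧ y.1 = Sum.inr e ∧ v ∈ e) ∨
             (∃ v e, y.1 = Sum.inl v ∧ x.1 = Sum.inr e ∧ v ∈ e)
  symm := ⟨fun _ _ h => h.elim Or.inr Or.inl⟩
  loopless := by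
    constructor
    rintro x (⟨v, e, h1, h2, _⟩ | ⟨v, e, h1, h2, _⟩) <;> rw [h1] at h2 <;> simp at h2

/-- `H` is 2-connected iff its incidence graph is a 2-connected graph. -/
def TwoConnected (H : Hypergraph' α) : Prop := IsTwoConnectedGraph H.incidenceGraph

/-- `H` contains a Berge cycle of length `c`: `c` distinct vertices `v_1, …, v_c` and
`c` distinct edges `e_1, …, e_c` with `{v_i, v_{i+1}} ⊆ e_i` (indices mod `c`). -/
def HasBergeCycle (H : Hypergraph' α) (c : ℕ) : Prop :=
  2 ≤ c ∧ ∃ (v : ZMod c → α) (e : ZMod c → Finset α),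
    Function.Injective v ∧ Function.Injective e ∧
    (∀ i, e i ∈ H.edges) ∧ (∀ i, v i ∈ e i) ∧ (∀ i, v (i + 1) ∈ e i)

end Hypergraph'

open Hypergraph'

variable {α : Type*} [DecidableEq α]

/-- A Berge cycle of length `c` in `H`, with defining vertices `v i` and edges `e i`
indexed cyclically by `ZMod c`; edge `e i` contains `v i` and `v (i+1)`. -/
structure BergeCycle (H : Hypergraph' α) (c : ℕ) where
  hc : 2 ≤ c
  v : ZMod c → α
  e : ZMod c → Finset α
  v_inj : Function.Injective v
  e_inj : Function.Injective e
  e_mem : ∀ i, e i ∈ H.edges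
  mem_self : ∀ i, v i ∈ e i
  mem_succ : ∀ i, v (i + 1) ∈ e i

/-- The set of defining vertices of a Berge cycle. -/
def BergeCycle.vset {H : Hypergraph' α} {c : ℕ} (C : BergeCycle H c) : Finset α :=
  letI : NeZero c := ⟨by have h := C.hc; omega⟩
  Finset.image C.v Finset.univ

/-- The set of edges of a Berge cycle. -/
def BergeCycle.eset {H : Hypergraph' α} {c : ℕ} (C : BergeCycle H c) : Finset (Finset α) :=
  letI : NeZero c := ⟨by have h := C.hc; omega⟩
  Finset.image C.e Finset.univ

/-- A Berge path `u 0, f 0, u 1, …, f (ℓ-1), u ℓ` in `H` with `ℓ` edges: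
distinct vertices, distinct edges, and `{u i, u (i+1)} ⊆ f i`. -/
structure BergePath (H : Hypergraph' α) (ℓ : ℕ) where
  u : Fin (ℓ + 1) → α
  f : Fin ℓ → Finset α
  u_inj : Function.Injective u
  f_inj : Function.Injective f
  u_mem : ∀ i, u i ∈ H.verts
  f_mem : ∀ i, f i ∈ H.edges
  mem_cast : ∀ i : Fin ℓ, u i.castSucc ∈ f i
  mem_succ : ∀ i : Fin ℓ, u i.succ ∈ f i

def BergePath.vset {H : Hypergraph' α} {ℓ : ℕ} (P : BergePath H ℓ) : Finset α :=
  Finset.image P.u Finset.univ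

def BergePath.eset {H : Hypergraph' α} {ℓ : ℕ} (P : BergePath H ℓ) : Finset (Finset α) :=
  Finset.image P.f Finset.univ

/-- A partial Berge path `f_0, u_1, f_1, …, f_(ℓ-1), u_ℓ`, beginning with an edge:
here `u i` denotes the vertex `u_(i+1)` and `f i` denotes the edge `f_i`, so that
`u_1 ∈ f_0` and `{u_i, u_(i+1)} ⊆ f_i` for `1 ≤ i ≤ ℓ-1`. -/
structure PartialBergePath (H : Hypergraph' α) (ℓ : ℕ) where
  u : Fin ℓ → α
  f : Fin ℓ → Finset α
  u_inj : Function.Injective u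
  f_inj : Function.Injective f
  u_mem : ∀ i, u i ∈ H.verts
  f_mem : ∀ i, f i ∈ H.edges
  mem_self : ∀ i : Fin ℓ, u i ∈ f i
  mem_next : ∀ (i : ℕ) (h : i + 1 < ℓ), u ⟨i, by omega⟩ ∈ f ⟨i + 1, h⟩

def PartialBergePath.vset {H : Hypergraph' α} {ℓ : ℕ} (P : PartialBergePath H ℓ) : Finset α :=
  Finset.image P.u Finset.univ

def PartialBergePath.eset {H : Hypergraph' α} {ℓ : ℕ} (P : PartialBergePath H ℓ) :
    Finset (Finset α) :=
  Finset.image P.f Finset.univ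

/-- An ordinary lollipop (o-lollipop): a Berge cycle `C` together with a Berge path `P`
starting at a vertex of `C`, with `|V(C) ∩ V(P)| = 1` and `E(C) ∩ E(P) = ∅`. -/
structure OLollipop (H : Hypergraph' α) (c ℓ : ℕ) where
  C : BergeCycle H c
  P : BergePath H ℓ
  start_mem : P.u 0 ∈ C.vset
  inter_v : C.vset ∩ P.vset = {P.u 0}
  inter_e : C.eset ∩ P.eset = ∅

/-- A partial lollipop (p-lollipop): a Berge cycle `C` together with a partial Berge
path `P` whose first edge is an edge of `C`, with `V(C) ∩ V(P) = ∅` and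
`E(C) ∩ E(P) = {f_0}`. -/
structure PLollipop (H : Hypergraph' α) (c ℓ : ℕ) where
  hl : 1 ≤ ℓ
  C : BergeCycle H c
  P : PartialBergePath H ℓ
  first_edge : P.f ⟨0, hl⟩ ∈ C.eset
  inter_v : C.vset ∩ P.vset = ∅
  inter_e : C.eset ∩ P.eset = {P.f ⟨0, hl⟩}

/-- A lollipop of `H` is either an o-lollipop or a p-lollipop. -/
inductive Lollipop (H : Hypergraph' α) : Type _ where
  | o : (c ℓ : ℕ) → OLollipop H c ℓ → Lollipop H
  | p : (c ℓ : ℕ) → PLollipop H c ℓ → Lollipop H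

namespace Lollipop

variable {H : Hypergraph' α}

/-- The set of defining vertices of the cycle of a lollipop. -/
def cycVset : Lollipop H → Finset α
  | .o _ _ L => L.C.vset
  | .p _ _ L => L.C.vset

/-- The set of edges of the cycle of a lollipop. -/
def cycEset : Lollipop H → Finset (Finset α)
  | .o _ _ L => L.C.eset
  | .p _ _ L => L.C.eset

/-- The set of vertices of the path of a lollipop. -/
def pathVset : Lollipop H → Finset α
  | .o _ _ L => L.P.vset
  | .p _ _ L => L.P.vset

/-- The set of edges of the path of a lollipop. -/
def pathEset : Lollipop H → Finset (Finset α)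
  | .o _ _ L => L.P.eset
  | .p _ _ L => L.P.eset

/-- `|V(P) − V(C)|`. -/
def pGain (L : Lollipop H) : ℕ := (L.pathVset \ L.cycVset).card

/-- The number of incidences between vertices of `V(P) − V(C)` and edges of
`E(C) − E(P)`, counted with multiplicity. -/
def incCount (L : Lollipop H) : ℕ :=
  ∑ e ∈ (L.cycEset \ L.pathEset), (e ∩ (L.pathVset \ L.cycVset)).card

/-- The number of edges of `E(P) − E(C)` entirely contained in `V(P) − V(C)`. -/
def contCount (L : Lollipop H) : ℕ :=
  ((L.pathEset \ L.cycEset).filter (fun e => e ⊆ L.pathVset \ L.cycVset)).card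

/-- 1-good: the cycle is as long as possible among all lollipops. -/
def Good1 (L : Lollipop H) : Prop := ∀ L' : Lollipop H, L'.cycVset.card ≤ L.cycVset.card

/-- 2-good: lexicographically maximizes `(|V(C)|, |V(P)−V(C)|)`. -/
def Good2 (L : Lollipop H) : Prop :=
  L.Good1 ∧ ∀ L' : Lollipop H, L'.cycVset.card = L.cycVset.card → L'.pGain ≤ L.pGain

/-- 3-good. -/
def Good3 (L : Lollipop H) : Prop :=
  L.Good2 ∧ ∀ L' : Lollipop H, L'.cycVset.card = L.cycVset.card → L'.pGain = L.pGain →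
    L'.incCount ≤ L.incCount

/-- 4-good (best). -/
def Good4 (L : Lollipop H) : Prop :=
  L.Good3 ∧ ∀ L' : Lollipop H, L'.cycVset.card = L.cycVset.card → L'.pGain = L.pGain →
    L'.incCount = L.incCount → L'.contCount ≤ L.contCount

end Lollipop

/-- A disjoint cycle-path pair (dcp-pair): a Berge cycle and a Berge path having no
common edges and such that no defining vertex of the cycle is a vertex of the path. -/
structure DcpPair (H : Hypergraph' α) where
  c : ℕ
  l : ℕ
  C : BergeCycle H c
  P : BergePath H l
  disj_v : Disjoint C.vset P.vset
  disj_e : Disjoint C.eset P.eset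

namespace DcpPair

variable {H : Hypergraph' α}

/-- The number of incidences between vertices of `V(P)` and edges of `E(C)`,
counted with multiplicity. -/
def incCount (D : DcpPair H) : ℕ := ∑ e ∈ D.C.eset, (e ∩ D.P.vset).card

/-- The number of edges of `E(P)` entirely contained in `V(P)`. -/
def contCount (D : DcpPair H) : ℕ := (D.P.eset.filter (fun e => e ⊆ D.P.vset)).card

/-- 1-good dcp-pair. -/
def Good1 (D : DcpPair H) : Prop := ∀ D' : DcpPair H, D'.C.vset.card ≤ D.C.vset.card

/-- 2-good dcp-pair: lexicographically maximizes `(|V(C)|, |V(P)|)`. -/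
def Good2 (D : DcpPair H) : Prop :=
  D.Good1 ∧ ∀ D' : DcpPair H, D'.C.vset.card = D.C.vset.card →
    D'.P.vset.card ≤ D.P.vset.card

/-- 3-good dcp-pair. -/
def Good3 (D : DcpPair H) : Prop :=
  D.Good2 ∧ ∀ D' : DcpPair H, D'.C.vset.card = D.C.vset.card →
    D'.P.vset.card = D.P.vset.card → D'.incCount ≤ D.incCount

/-- 4-good dcp-pair. -/
def Good4 (D : DcpPair H) : Prop :=
  D.Good3 ∧ ∀ D' : DcpPair H, D'.C.vset.card = D.C.vset.card →
    D'.P.vset.card = D.P.vset.card → D'.incCount = D.incCount →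
    D'.contCount ≤ D.contCount

end DcpPair

/-- The `E'`-neighborhood of a vertex `x`: all vertices `w` such that some edge of `E'`
contains both `x` and `w`. -/
def nbhd (E' : Finset (Finset α)) (x : α) : Finset α :=
  (E'.filter (fun e => x ∈ e)).biUnion id

/-- `W ⊆ V(C)` is `(u,C)`-expanding: for every two distinct vertices `x, y ∈ W` there is
a Berge path `R` from `x` to `y` whose internal vertices avoid `V(C) ∪ {u}` and all of
whose edges lie in `E(H) − E(C)`. -/
def IsExpanding {α : Type*} [DecidableEq α] {H : Hypergraph' α} {c : ℕ}
    (C : BergeCycle H c) (u : α) (W : Finset α) : Prop :=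
  W ⊆ C.vset ∧ ∀ x ∈ W, ∀ y ∈ W, x ≠ y →
    ∃ (ℓ : ℕ) (R : BergePath H ℓ),
      R.u 0 = x ∧ R.u (Fin.last ℓ) = y ∧
      (∀ t : Fin (ℓ + 1), t ≠ 0 → t ≠ Fin.last ℓ → R.u t ∉ C.vset ∧ R.u t ≠ u) ∧
      (∀ t : Fin ℓ, R.f t ∉ C.eset)



section S18aux
variable {α : Type*} [DecidableEq α]

namespace S18
variable {c : ℕ} (Cv : ZMod c → α) (Ce : ZMod c → Finset α)
  {ℓ' : ℕ} (Ru : Fin (ℓ' + 2) → α) (Rf : Fin (ℓ' + 1) → Finset α)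
  (u : α) (a : ZMod c) (d : ℕ)

def Vfun (k : ℕ) : α :=
  if k = 0 then u
  else if k ≤ d then Cv (a + (k : ZMod c))
  else if k < d + ℓ' + 1 then Ru ⟨min (d + ℓ' + 1 - k) (ℓ' + 1), by omega⟩
  else Cv (a - ((k - (d + ℓ' + 1) : ℕ) : ZMod c))

def Efun (g₁ g₂ : Finset α) (k : ℕ) : Finset α :=
  if k = 0 then g₁
  else if k < d then Ce (a + (k : ZMod c))
  else if k < d + ℓ' + 1 then Rf ⟨min (d + ℓ' - k) ℓ', by omega⟩
  else if k < c + ℓ' then Ce (a - ((k - (d + ℓ' + 1) : ℕ) : ZMod c) - 1)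
  else g₂

set_option linter.unusedSectionVars false

lemma Vfun_A : Vfun Cv Ru u a d 0 = u := by simp [Vfun]

lemma Vfun_B {k : ℕ} (h0 : 1 ≤ k) (h : k ≤ d) :
    Vfun Cv Ru u a d k = Cv (a + (k : ZMod c)) := by
  unfold Vfun; rw [if_neg (by omega), if_pos h]

lemma Vfun_M {k : ℕ} (h1 : d < k) (h2 : k < d + ℓ' + 1) :
    Vfun Cv Ru u a d k = Ru ⟨d + ℓ' + 1 - k, by omega⟩ := by
  unfold Vfun
  rw [if_neg (by omega), if_neg (by omega), if_pos h2]
  congr 1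
  exact Fin.ext (by simp; omega)

lemma Vfun_D {k : ℕ} (h : d + ℓ' + 1 ≤ k) :
    Vfun Cv Ru u a d k = Cv (a - ((k - (d + ℓ' + 1) : ℕ) : ZMod c)) := by
  unfold Vfun; rw [if_neg (by omega), if_neg (by omega), if_neg (by omega)]

lemma Efun_A (g₁ g₂ : Finset α) : Efun Ce Rf a d g₁ g₂ 0 = g₁ := by simp [Efun]

lemma Efun_B (g₁ g₂ : Finset α) {k : ℕ} (h0 : 1 ≤ k) (h : k < d) :
    Efun Ce Rf a d g₁ g₂ k = Ce (a + (k : ZMod c)) := by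
  unfold Efun; rw [if_neg (by omega), if_pos h]

lemma Efun_M (g₁ g₂ : Finset α) {k : ℕ} (h0 : 1 ≤ k) (h1 : d ≤ k) (h2 : k < d + ℓ' + 1) :
    Efun Ce Rf a d g₁ g₂ k = Rf ⟨d + ℓ' - k, by omega⟩ := by
  unfold Efun
  rw [if_neg (by omega), if_neg (by omega), if_pos h2]
  congr 1
  exact Fin.ext (by simp; omega)

lemma Efun_D (g₁ g₂ : Finset α) {k : ℕ} (h1 : d + ℓ' + 1 ≤ k) (h2 : k < c + ℓ') :
    Efun Ce Rf a d g₁ g₂ k = Ce (a - ((k - (d + ℓ' + 1) : ℕ) : ZMod c) - 1) := by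
  unfold Efun; rw [if_neg (by omega), if_neg (by omega), if_neg (by omega), if_pos h2]

lemma Efun_E (g₁ g₂ : Finset α) {k : ℕ} (hdc : d < c) (h2 : c + ℓ' ≤ k) :
    Efun Ce Rf a d g₁ g₂ k = g₂ := by
  unfold Efun
  rw [if_neg (by omega), if_neg (by omega), if_neg (by omega), if_neg (by omega)]

end S18
end S18aux

open Hypergraph' in
lemma hasBergeCycle_of_fin {α : Type*} [DecidableEq α] (H : Hypergraph' α) (m : ℕ) (hm : 2 ≤ m)
    (v : Fin m → α) (e : Fin m → Finset α)
    (hv : Function.Injective v) (he : Function.Injective e)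
    (heE : ∀ i, e i ∈ H.edges)
    (h1 : ∀ i, v i ∈ e i)
    (h2 : ∀ i : Fin m, v ⟨(i.val + 1) % m, Nat.mod_lt _ (by omega)⟩ ∈ e i) :
    H.HasBergeCycle m := by
  haveI : NeZero m := ⟨by omega⟩
  refine ⟨hm, fun i => v ⟨i.val, i.val_lt⟩, fun i => e ⟨i.val, i.val_lt⟩, ?_, ?_, ?_, ?_, ?_⟩
  · intro x y h
    exact ZMod.val_injective m (congrArg Fin.val (hv h))
  · intro x y h
    exact ZMod.val_injective m (congrArg Fin.val (he h))
  · intro i; exact heE _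
  · intro i; exact h1 _
  · intro i
    have hval : (i + 1).val = (i.val + 1) % m := by
      haveI : Fact (1 < m) := ⟨by omega⟩
      rw [ZMod.val_add, ZMod.val_one]
    have := h2 ⟨i.val, i.val_lt⟩
    convert this using 2
    exact Fin.ext hval

lemma master {α : Type*} [DecidableEq α] {c : ℕ}
    {H : Hypergraph' α} (C : BergeCycle H c)
    (hmax : ∀ m, H.HasBergeCycle m → m ≤ c)
    (u : α) (huC : u ∉ C.vset)
    (a b : ZMod c) (hab : a ≠ b)
    (ℓ : ℕ) (R : BergePath H ℓ)
    (hR0 : R.u 0 = C.v a) (hRl : R.u (Fin.last ℓ) = C.v b)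
    (hint : ∀ t : Fin (ℓ + 1), t ≠ 0 → t ≠ Fin.last ℓ → R.u t ∉ C.vset ∧ R.u t ≠ u)
    (hRe : ∀ t : Fin ℓ, R.f t ∉ C.eset)
    (g₁ g₂ : Finset α)
    (hg₁H : g₁ ∈ H.edges) (hg₂H : g₂ ∈ H.edges) (hgne : g₁ ≠ g₂)
    (hg₁C : ∀ k : ZMod c, k ≠ a → k ≠ b → g₁ ≠ C.e k)
    (hg₂C : ∀ k : ZMod c, k ≠ a → k ≠ b → g₂ ≠ C.e k)
    (hg₁R : ∀ t : Fin ℓ, g₁ ≠ R.f t) (hg₂R : ∀ t : Fin ℓ, g₂ ≠ R.f t)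
    (hu₁ : u ∈ g₁) (hv₁ : C.v (a + 1) ∈ g₁)
    (hu₂ : u ∈ g₂) (hv₂ : C.v (b + 1) ∈ g₂) : False := by
  have hc : 2 ≤ c := C.hc
  haveI : NeZero c := ⟨by omega⟩
  have memv : ∀ x : ZMod c, C.v x ∈ C.vset := by
    intro x; simp [BergeCycle.vset]
  have meme : ∀ x : ZMod c, C.e x ∈ C.eset := by
    intro x; simp [BergeCycle.eset]
  have hl : 1 ≤ ℓ := by
    by_contra h
    have hl0 : ℓ = 0 := by omega
    subst hl0
    have : R.u 0 = R.u (Fin.last 0) := congrArg R.u (by ext; omega)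
    rw [hR0, hRl] at this
    exact hab (C.v_inj this)
  obtain ⟨ℓ', rfl⟩ : ∃ ℓ'', ℓ = ℓ'' + 1 := ⟨ℓ - 1, by omega⟩
  set d : ℕ := (b - a).val with hd_def
  have hdb : ((d : ℕ) : ZMod c) = b - a := ZMod.natCast_rightInverse _
  have hd0 : 1 ≤ d := by
    rcases Nat.eq_zero_or_pos d with h | h
    · exfalso; apply hab
      have h2 : b - a = 0 := by rw [← hdb, h]; simp
      exact (sub_eq_zero.mp h2).symm
    · exact h
  have hdc : d < c := ZMod.val_lt _
  have hb : b = a + (d : ZMod c) := by rw [hdb]; ring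
  have castinj : ∀ x y : ℕ, x < c → y < c → ((x : ZMod c) = (y : ZMod c)) → x = y := by
    intro x y hx hy h
    have := congrArg ZMod.val h
    rwa [ZMod.val_cast_of_lt hx, ZMod.val_cast_of_lt hy] at this
  have dvd_of : ∀ n : ℕ, ((n : ZMod c) = 0) → c ≤ n ∨ n = 0 := by
    intro n h
    rcases Nat.eq_zero_or_pos n with h0 | h0
    · exact Or.inr h0
    · exact Or.inl (Nat.le_of_dvd h0 ((ZMod.natCast_eq_zero_iff n c).mp h))
  -- helpers about R
  have h0fin : (0 : Fin (ℓ' + 2)) = ⟨0, by omega⟩ := by ext; simp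
  have hR0' : R.u ⟨0, by omega⟩ = C.v a := by rw [← hR0, h0fin]
  have hRl' : R.u ⟨ℓ' + 1, by omega⟩ = C.v b := by rw [← hRl]; rfl
  have Rsucc : ∀ (n : ℕ) (h : n < ℓ' + 1), R.u ⟨n + 1, by omega⟩ ∈ R.f ⟨n, h⟩ :=
    fun n h => R.mem_succ ⟨n, h⟩
  have Rcast : ∀ (n : ℕ) (h : n < ℓ' + 1), R.u ⟨n, by omega⟩ ∈ R.f ⟨n, h⟩ :=
    fun n h => R.mem_cast ⟨n, h⟩
  have RuEq : ∀ (x y : ℕ) (hx : x < ℓ' + 2) (hy : y < ℓ' + 2), x = y →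
      R.u ⟨x, hx⟩ = R.u ⟨y, hy⟩ := by
    intro x y hx hy hxy; subst hxy; rfl
  have RfEq : ∀ (x y : ℕ) (hx : x < ℓ' + 1) (hy : y < ℓ' + 1), x = y →
      R.f ⟨x, hx⟩ = R.f ⟨y, hy⟩ := by
    intro x y hx hy hxy; subst hxy; rfl
  have hint' : ∀ (x : ℕ) (h1 : 1 ≤ x) (h2 : x ≤ ℓ'),
      R.u ⟨x, by omega⟩ ∉ C.vset ∧ R.u ⟨x, by omega⟩ ≠ u := by
    intro x h1 h2
    refine hint ⟨x, by omega⟩ ?_ ?_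
    · intro hh; rw [h0fin] at hh
      have := congrArg Fin.val hh; simp at this; omega
    · intro hh
      have := congrArg Fin.val hh; simp [Fin.val_last] at this; omega
  -- ZMod index helpers
  have caddinj : ∀ x y : ℕ, x < c → y < c → a + (x : ZMod c) = a + (y : ZMod c) → x = y := by
    intro x y hx hy h
    exact castinj x y hx hy (by linear_combination h)
  have csubinj : ∀ x y : ℕ, x < c → y < c → a - (x : ZMod c) = a - (y : ZMod c) → x = y := by
    intro x y hx hy h
    exact castinj x y hx hy (by linear_combination -h)
  have vBD_ne : ∀ x t : ℕ, 1 ≤ x → x ≤ d → t ≤ c - 1 - d →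
      a + (x : ZMod c) ≠ a - (t : ZMod c) := by
    intro x t hx hxd ht h
    have h2 : ((x + t : ℕ) : ZMod c) = 0 := by push_cast; linear_combination h
    rcases dvd_of _ h2 with h3 | h3 <;> omega
  have eBD_ne : ∀ x t : ℕ, 1 ≤ x → x < d → t + d ≤ c - 2 →
      a + (x : ZMod c) ≠ a - (t : ZMod c) - 1 := by
    intro x t hx hxd ht h
    have h2 : ((x + t + 1 : ℕ) : ZMod c) = 0 := by push_cast; linear_combination h
    rcases dvd_of _ h2 with h3 | h3 <;> omega
  have idxB_ne_a : ∀ x : ℕ, 1 ≤ x → x < c → a + (x : ZMod c) ≠ a := by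
    intro x hx hxc h
    have h2 : ((x : ℕ) : ZMod c) = 0 := by linear_combination h
    rcases dvd_of _ h2 with h3 | h3 <;> omega
  have idxB_ne_b : ∀ x : ℕ, 1 ≤ x → x < d → a + (x : ZMod c) ≠ b := by
    intro x hx hxd h
    rw [hb] at h
    have := caddinj x d (by omega) (by omega) h
    omega
  have idxD_ne_a : ∀ t : ℕ, t + d ≤ c - 2 → a - (t : ZMod c) - 1 ≠ a := by
    intro t ht h
    have h2 : ((t + 1 : ℕ) : ZMod c) = 0 := by push_cast; linear_combination -h
    rcases dvd_of _ h2 with h3 | h3 <;> omega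
  have idxD_ne_b : ∀ t : ℕ, t + d ≤ c - 2 → a - (t : ZMod c) - 1 ≠ b := by
    intro t ht h
    rw [hb] at h
    have h2 : ((t + 1 + d : ℕ) : ZMod c) = 0 := by push_cast; linear_combination -h
    rcases dvd_of _ h2 with h3 | h3 <;> omega
  have hg₁B : ∀ x : ℕ, 1 ≤ x → x < d → g₁ ≠ C.e (a + (x : ZMod c)) :=
    fun x hx hxd => hg₁C _ (idxB_ne_a x hx (by omega)) (idxB_ne_b x hx hxd)
  have hg₂B : ∀ x : ℕ, 1 ≤ x → x < d → g₂ ≠ C.e (a + (x : ZMod c)) :=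
    fun x hx hxd => hg₂C _ (idxB_ne_a x hx (by omega)) (idxB_ne_b x hx hxd)
  have hg₁D : ∀ t : ℕ, t + d ≤ c - 2 → g₁ ≠ C.e (a - (t : ZMod c) - 1) :=
    fun t ht => hg₁C _ (idxD_ne_a t ht) (idxD_ne_b t ht)
  have hg₂D : ∀ t : ℕ, t + d ≤ c - 2 → g₂ ≠ C.e (a - (t : ZMod c) - 1) :=
    fun t ht => hg₂C _ (idxD_ne_a t ht) (idxD_ne_b t ht)
  set m : ℕ := c + (ℓ' + 1) with hm_def
  have cls : ∀ k : Fin m, k.val = 0 ∨ (1 ≤ k.val ∧ k.val ≤ d) ∨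
      (d < k.val ∧ k.val < d + ℓ' + 1) ∨ (d + ℓ' + 1 ≤ k.val ∧ k.val ≤ c + ℓ') := by
    intro k; have := k.isLt; omega
  have clsE : ∀ k : Fin m, k.val = 0 ∨ (1 ≤ k.val ∧ k.val < d) ∨
      (1 ≤ k.val ∧ d ≤ k.val ∧ k.val < d + ℓ' + 1) ∨
      (d + ℓ' + 1 ≤ k.val ∧ k.val < c + ℓ') ∨ k.val = c + ℓ' := by
    intro k; have := k.isLt; omega
  have key : H.HasBergeCycle m := by
    apply hasBergeCycle_of_fin H m (by omega)
      (fun k => S18.Vfun C.v R.u u a d k.val)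
      (fun k => S18.Efun C.e R.f a d g₁ g₂ k.val)
    · -- v' injective
      intro k₁ k₂ hEq
      simp only at hEq
      apply Fin.ext
      rcases cls k₁ with h1 | ⟨h1a, h1b⟩ | ⟨h1a, h1b⟩ | ⟨h1a, h1b⟩ <;>
        rcases cls k₂ with h2 | ⟨h2a, h2b⟩ | ⟨h2a, h2b⟩ | ⟨h2a, h2b⟩
      · omega
      · rw [h1, S18.Vfun_A, S18.Vfun_B _ _ _ _ _ h2a h2b] at hEq
        exact absurd (hEq ▸ memv (a + (k₂.val : ZMod c))) huC
      · rw [h1, S18.Vfun_A, S18.Vfun_M _ _ _ _ _ h2a h2b] at hEq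
        exact absurd hEq.symm (hint' (d + ℓ' + 1 - k₂.val) (by omega) (by omega)).2
      · rw [h1, S18.Vfun_A, S18.Vfun_D _ _ _ _ _ h2a] at hEq
        exact absurd (hEq ▸ memv _) huC
      · rw [h2, S18.Vfun_A, S18.Vfun_B _ _ _ _ _ h1a h1b] at hEq
        exact absurd (hEq ▸ memv _) huC
      · rw [S18.Vfun_B _ _ _ _ _ h1a h1b, S18.Vfun_B _ _ _ _ _ h2a h2b] at hEq
        exact caddinj _ _ (by omega) (by omega) (C.v_inj hEq)
      · rw [S18.Vfun_B _ _ _ _ _ h1a h1b, S18.Vfun_M _ _ _ _ _ h2a h2b] at hEq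
        exact absurd (hEq ▸ memv _) (hint' (d + ℓ' + 1 - k₂.val) (by omega) (by omega)).1
      · rw [S18.Vfun_B _ _ _ _ _ h1a h1b, S18.Vfun_D _ _ _ _ _ h2a] at hEq
        exact absurd (C.v_inj hEq)
          (vBD_ne k₁.val (k₂.val - (d + ℓ' + 1)) h1a h1b (by omega))
      · rw [h2, S18.Vfun_A, S18.Vfun_M _ _ _ _ _ h1a h1b] at hEq
        exact absurd hEq (hint' (d + ℓ' + 1 - k₁.val) (by omega) (by omega)).2
      · rw [S18.Vfun_M _ _ _ _ _ h1a h1b, S18.Vfun_B _ _ _ _ _ h2a h2b] at hEq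
        exact absurd (hEq ▸ memv _) (hint' (d + ℓ' + 1 - k₁.val) (by omega) (by omega)).1
      · rw [S18.Vfun_M _ _ _ _ _ h1a h1b, S18.Vfun_M _ _ _ _ _ h2a h2b] at hEq
        have := congrArg Fin.val (R.u_inj hEq)
        simp at this; omega
      · rw [S18.Vfun_M _ _ _ _ _ h1a h1b, S18.Vfun_D _ _ _ _ _ h2a] at hEq
        exact absurd (hEq ▸ memv _) ((hint' (d + ℓ' + 1 - k₁.val) (by omega) (by omega)).1)
      · rw [h2, S18.Vfun_A, S18.Vfun_D _ _ _ _ _ h1a] at hEq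
        exact absurd (hEq ▸ memv _) huC
      · rw [S18.Vfun_D _ _ _ _ _ h1a, S18.Vfun_B _ _ _ _ _ h2a h2b] at hEq
        exact absurd (C.v_inj hEq.symm)
          (vBD_ne k₂.val (k₁.val - (d + ℓ' + 1)) h2a h2b (by omega))
      · rw [S18.Vfun_D _ _ _ _ _ h1a, S18.Vfun_M _ _ _ _ _ h2a h2b] at hEq
        exact absurd (hEq ▸ memv _) ((hint' (d + ℓ' + 1 - k₂.val) (by omega) (by omega)).1)
      · rw [S18.Vfun_D _ _ _ _ _ h1a, S18.Vfun_D _ _ _ _ _ h2a] at hEq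
        have := csubinj _ _ (by omega) (by omega) (C.v_inj hEq)
        omega
    · -- e' injective
      intro k₁ k₂ hEq
      simp only at hEq
      apply Fin.ext
      rcases clsE k₁ with h1 | ⟨h1a, h1b⟩ | ⟨h1a, h1b, h1c⟩ | ⟨h1a, h1b⟩ | h1 <;>
        rcases clsE k₂ with h2 | ⟨h2a, h2b⟩ | ⟨h2a, h2b, h2c⟩ | ⟨h2a, h2b⟩ | h2
      · omega
      · rw [h1, S18.Efun_A, S18.Efun_B _ _ _ _ _ _ h2a h2b] at hEq
        exact absurd hEq (hg₁B _ h2a h2b)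
      · rw [h1, S18.Efun_A, S18.Efun_M _ _ _ _ _ _ h2a h2b h2c] at hEq
        exact absurd hEq (hg₁R _)
      · rw [h1, S18.Efun_A, S18.Efun_D _ _ _ _ _ _ h2a h2b] at hEq
        exact absurd hEq (hg₁D _ (by omega))
      · rw [h1, S18.Efun_A, S18.Efun_E _ _ _ _ _ _ hdc (by omega)] at hEq
        exact absurd hEq hgne
      · rw [h2, S18.Efun_A, S18.Efun_B _ _ _ _ _ _ h1a h1b] at hEq
        exact absurd hEq.symm (hg₁B _ h1a h1b)
      · rw [S18.Efun_B _ _ _ _ _ _ h1a h1b, S18.Efun_B _ _ _ _ _ _ h2a h2b] at hEq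
        exact caddinj _ _ (by omega) (by omega) (C.e_inj hEq)
      · rw [S18.Efun_B _ _ _ _ _ _ h1a h1b, S18.Efun_M _ _ _ _ _ _ h2a h2b h2c] at hEq
        have := meme (a + (k₁.val : ZMod c)); rw [hEq] at this
        exact absurd this (hRe _)
      · rw [S18.Efun_B _ _ _ _ _ _ h1a h1b, S18.Efun_D _ _ _ _ _ _ h2a h2b] at hEq
        exact absurd (C.e_inj hEq) (eBD_ne _ _ h1a h1b (by omega))
      · rw [S18.Efun_B _ _ _ _ _ _ h1a h1b, S18.Efun_E _ _ _ _ _ _ hdc (by omega)] at hEq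
        exact absurd hEq.symm (hg₂B _ h1a h1b)
      · rw [h2, S18.Efun_A, S18.Efun_M _ _ _ _ _ _ h1a h1b h1c] at hEq
        exact absurd hEq.symm (hg₁R _)
      · rw [S18.Efun_M _ _ _ _ _ _ h1a h1b h1c, S18.Efun_B _ _ _ _ _ _ h2a h2b] at hEq
        have := meme (a + (k₂.val : ZMod c)); rw [← hEq] at this
        exact absurd this (hRe _)
      · rw [S18.Efun_M _ _ _ _ _ _ h1a h1b h1c, S18.Efun_M _ _ _ _ _ _ h2a h2b h2c] at hEq
        have := congrArg Fin.val (R.f_inj hEq)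
        simp at this; omega
      · rw [S18.Efun_M _ _ _ _ _ _ h1a h1b h1c, S18.Efun_D _ _ _ _ _ _ h2a h2b] at hEq
        have := meme (a - ((k₂.val - (d + ℓ' + 1) : ℕ) : ZMod c) - 1); rw [← hEq] at this
        exact absurd this (hRe _)
      · rw [S18.Efun_M _ _ _ _ _ _ h1a h1b h1c, S18.Efun_E _ _ _ _ _ _ hdc (by omega)] at hEq
        exact absurd hEq.symm (hg₂R _)
      · rw [h2, S18.Efun_A, S18.Efun_D _ _ _ _ _ _ h1a h1b] at hEq
        exact absurd hEq.symm (hg₁D _ (by omega))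
      · rw [S18.Efun_D _ _ _ _ _ _ h1a h1b, S18.Efun_B _ _ _ _ _ _ h2a h2b] at hEq
        exact absurd (C.e_inj hEq.symm) (eBD_ne _ _ h2a h2b (by omega))
      · rw [S18.Efun_D _ _ _ _ _ _ h1a h1b, S18.Efun_M _ _ _ _ _ _ h2a h2b h2c] at hEq
        have := meme (a - ((k₁.val - (d + ℓ' + 1) : ℕ) : ZMod c) - 1); rw [hEq] at this
        exact absurd this (hRe _)
      · rw [S18.Efun_D _ _ _ _ _ _ h1a h1b, S18.Efun_D _ _ _ _ _ _ h2a h2b] at hEq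
        have h3 : a - ((k₁.val - (d + ℓ' + 1) : ℕ) : ZMod c) = a - ((k₂.val - (d + ℓ' + 1) : ℕ) : ZMod c) := by
          linear_combination C.e_inj hEq
        have := csubinj _ _ (by omega) (by omega) h3
        omega
      · rw [S18.Efun_D _ _ _ _ _ _ h1a h1b, S18.Efun_E _ _ _ _ _ _ hdc (by omega)] at hEq
        exact absurd hEq.symm (hg₂D _ (by omega))
      · rw [S18.Efun_E _ _ _ _ _ _ hdc (by omega), h2, S18.Efun_A] at hEq
        exact absurd hEq.symm hgne
      · rw [S18.Efun_E _ _ _ _ _ _ hdc (by omega), S18.Efun_B _ _ _ _ _ _ h2a h2b] at hEq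
        exact absurd hEq (hg₂B _ h2a h2b)
      · rw [S18.Efun_E _ _ _ _ _ _ hdc (by omega), S18.Efun_M _ _ _ _ _ _ h2a h2b h2c] at hEq
        exact absurd hEq (hg₂R _)
      · rw [S18.Efun_E _ _ _ _ _ _ hdc (by omega), S18.Efun_D _ _ _ _ _ _ h2a h2b] at hEq
        exact absurd hEq (hg₂D _ (by omega))
      · omega
    · intro k
      rcases clsE k with h | ⟨ha', hb'⟩ | ⟨ha', hb', hc'⟩ | ⟨ha', hb'⟩ | h
      · rw [h, S18.Efun_A]; exact hg₁H
      · rw [S18.Efun_B _ _ _ _ _ _ ha' hb']; exact C.e_mem _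
      · rw [S18.Efun_M _ _ _ _ _ _ ha' hb' hc']; exact R.f_mem _
      · rw [S18.Efun_D _ _ _ _ _ _ ha' hb']; exact C.e_mem _
      · rw [S18.Efun_E _ _ _ _ _ _ hdc (by omega)]; exact hg₂H
    · -- mem_self
      intro k
      rcases clsE k with h | ⟨ha', hb'⟩ | ⟨ha', hb', hc'⟩ | ⟨ha', hb'⟩ | h
      · rw [h, S18.Efun_A, S18.Vfun_A]; exact hu₁
      · rw [S18.Efun_B _ _ _ _ _ _ ha' hb', S18.Vfun_B _ _ _ _ _ ha' (by omega)]
        exact C.mem_self _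
      · rw [S18.Efun_M _ _ _ _ _ _ ha' hb' hc']
        rcases eq_or_lt_of_le hb' with hd' | hd'
        · rw [S18.Vfun_B _ _ _ _ _ ha' (by omega)]
          have hbv : a + ((k.val : ℕ) : ZMod c) = b := by rw [hb, hd']
          rw [hbv, ← hRl', RfEq (d + ℓ' - k.val) ℓ' (by omega) (by omega) (by omega)]
          exact Rsucc ℓ' (by omega)
        · rw [S18.Vfun_M _ _ _ _ _ hd' hc',
            RuEq (d + ℓ' + 1 - k.val) (d + ℓ' - k.val + 1) (by omega) (by omega) (by omega)]
          exact Rsucc (d + ℓ' - k.val) (by omega)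
      · rw [S18.Efun_D _ _ _ _ _ _ ha' hb', S18.Vfun_D _ _ _ _ _ ha']
        have := C.mem_succ (a - ((k.val - (d + ℓ' + 1) : ℕ) : ZMod c) - 1)
        rw [show a - ((k.val - (d + ℓ' + 1) : ℕ) : ZMod c) - 1 + 1
            = a - ((k.val - (d + ℓ' + 1) : ℕ) : ZMod c) from by ring] at this
        exact this
      · rw [S18.Efun_E _ _ _ _ _ _ hdc (by omega), S18.Vfun_D _ _ _ _ _ (by omega)]
        have hnat : ((k.val - (d + ℓ' + 1) : ℕ) : ZMod c) = -(d : ZMod c) - 1 := by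
          have h1 : ((k.val - (d + ℓ' + 1)) + d + 1 : ℕ) = c := by omega
          have h2 : (((k.val - (d + ℓ' + 1)) + d + 1 : ℕ) : ZMod c) = 0 := by
            rw [h1]; exact ZMod.natCast_self c
          push_cast at h2
          linear_combination h2
        rw [hnat, show a - (-(d : ZMod c) - 1) = b + 1 from by rw [hb]; ring]
        exact hv₂
    · -- mem_next
      intro k
      simp only [Fin.val_mk]
      rcases clsE k with h | ⟨ha', hb'⟩ | ⟨ha', hb', hc'⟩ | ⟨ha', hb'⟩ | h
      · rw [h, show (0 + 1) % m = 1 from Nat.mod_eq_of_lt (by omega), S18.Efun_A,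
          S18.Vfun_B _ _ _ _ _ le_rfl hd0, Nat.cast_one]
        exact hv₁
      · rw [show (k.val + 1) % m = k.val + 1 from Nat.mod_eq_of_lt (by omega),
          S18.Efun_B _ _ _ _ _ _ ha' hb', S18.Vfun_B _ _ _ _ _ (by omega) (by omega),
          show ((k.val + 1 : ℕ) : ZMod c) = (k.val : ZMod c) + 1 from by push_cast; ring,
          ← add_assoc]
        exact C.mem_succ _
      · rw [show (k.val + 1) % m = k.val + 1 from Nat.mod_eq_of_lt (by omega),
          S18.Efun_M _ _ _ _ _ _ ha' hb' hc']
        rcases Nat.lt_or_ge (k.val + 1) (d + ℓ' + 1) with hd' | hd'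
        · rw [S18.Vfun_M _ _ _ _ _ (by omega) hd',
            RuEq (d + ℓ' + 1 - (k.val + 1)) (d + ℓ' - k.val) (by omega) (by omega) (by omega)]
          exact Rcast (d + ℓ' - k.val) (by omega)
        · rw [S18.Vfun_D _ _ _ _ _ (by omega),
            show ((k.val + 1 - (d + ℓ' + 1) : ℕ) : ZMod c) = 0 from by
              rw [show k.val + 1 - (d + ℓ' + 1) = 0 from by omega]; simp,
            sub_zero, ← hR0',
            RfEq (d + ℓ' - k.val) 0 (by omega) (by omega) (by omega)]
          exact Rcast 0 (by omega)
      · rw [show (k.val + 1) % m = k.val + 1 from Nat.mod_eq_of_lt (by omega),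
          S18.Efun_D _ _ _ _ _ _ ha' hb', S18.Vfun_D _ _ _ _ _ (by omega),
          show ((k.val + 1 - (d + ℓ' + 1) : ℕ) : ZMod c)
              = ((k.val - (d + ℓ' + 1) : ℕ) : ZMod c) + 1 from by
            rw [show k.val + 1 - (d + ℓ' + 1) = (k.val - (d + ℓ' + 1)) + 1 from by omega]
            push_cast; ring,
          show a - (((k.val - (d + ℓ' + 1) : ℕ) : ZMod c) + 1)
              = a - ((k.val - (d + ℓ' + 1) : ℕ) : ZMod c) - 1 from by ring]
        exact C.mem_self _
      · rw [S18.Efun_E _ _ _ _ _ _ hdc (by omega),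
          show (k.val + 1) % m = 0 from by rw [h, hm_def]; exact Nat.mod_self _,
          S18.Vfun_A]
        exact hu₂
  have := hmax m key
  omega

def BergeCycle.rev {α : Type*} [DecidableEq α] {H : Hypergraph' α} {c : ℕ}
    (C : BergeCycle H c) : BergeCycle H c where
  hc := C.hc
  v i := C.v (-i)
  e i := C.e (-i - 1)
  v_inj := fun x y h => neg_inj.mp (C.v_inj h)
  e_inj := fun x y h => by
    have h2 := C.e_inj h
    have h3 : -x = -y := by linear_combination h2
    exact neg_inj.mp h3
  e_mem := fun i => C.e_mem _
  mem_self := fun i => by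
    have := C.mem_succ (-i - 1)
    rwa [show -i - 1 + 1 = -i from by ring] at this
  mem_succ := fun i => by
    show C.v (-(i + 1)) ∈ C.e (-i - 1)
    rw [show (-(i + 1) : ZMod c) = -i - 1 from by ring]
    exact C.mem_self _

lemma BergeCycle.rev_vset {α : Type*} [DecidableEq α] {H : Hypergraph' α} {c : ℕ}
    (C : BergeCycle H c) : C.rev.vset = C.vset := by
  haveI : NeZero c := ⟨by have := C.hc; omega⟩
  ext x
  simp only [BergeCycle.vset, BergeCycle.rev, Finset.mem_image, Finset.mem_univ, true_and]
  constructor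
  · rintro ⟨i, rfl⟩; exact ⟨-i, rfl⟩
  · rintro ⟨i, rfl⟩; exact ⟨-i, by rw [neg_neg]⟩

lemma BergeCycle.rev_eset {α : Type*} [DecidableEq α] {H : Hypergraph' α} {c : ℕ}
    (C : BergeCycle H c) : C.rev.eset = C.eset := by
  haveI : NeZero c := ⟨by have := C.hc; omega⟩
  ext x
  simp only [BergeCycle.eset, BergeCycle.rev, Finset.mem_image, Finset.mem_univ, true_and]
  constructor
  · rintro ⟨i, rfl⟩; exact ⟨-i - 1, rfl⟩
  · rintro ⟨i, rfl⟩; exact ⟨-i - 1, by rw [show -(-i - 1) - 1 = i from by ring]⟩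

/-- Claim `no2`. Let `C = v_1, e_1, …, v_c, e_c, v_1` be a longest
Berge cycle in an `r`-uniform hypergraph `H`, `u ∈ V(H) − V(C)`, and `W` a
`(u,C)`-expanding set. Then `u` lies in at most one edge of `{e_j : v_j ∈ W}` and in at
most one edge of `{e_{j−1} : v_j ∈ W}`. Moreover, if `v_j ∈ W` and `u ∈ e_j`, then for
every `v_i ∈ W − {v_j}` and every Berge path `R(v_i, v_j)` witnessing the expanding
property, any edge `e ∈ E(H) − E(C) − E(R)` containing `u` avoids `v_{i+1}`; similarly,
if `u ∈ e_{j−1}` then such an `e` avoids `v_{i−1}`. -/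
theorem statement18 {α : Type*} [DecidableEq α] (r c : ℕ)
    (H : Hypergraph' α) (hunif : H.Uniform r)
    (C : BergeCycle H c) (hmax : ∀ m, H.HasBergeCycle m → m ≤ c)
    (u : α) (huV : u ∈ H.verts) (huC : u ∉ C.vset)
    (W : Finset α) (hW : IsExpanding C u W) :
    (∀ i j : ZMod c, C.v i ∈ W → C.v j ∈ W → u ∈ C.e i → u ∈ C.e j → i = j) ∧
    (∀ i j : ZMod c, C.v i ∈ W → C.v j ∈ W → u ∈ C.e (i - 1) → u ∈ C.e (j - 1) → i = j) ∧
    (∀ j : ZMod c, C.v j ∈ W → u ∈ C.e j →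
      ∀ i : ZMod c, C.v i ∈ W → C.v i ≠ C.v j →
      ∀ (ℓ : ℕ) (R : BergePath H ℓ),
        R.u 0 = C.v i → R.u (Fin.last ℓ) = C.v j →
        (∀ t : Fin (ℓ + 1), t ≠ 0 → t ≠ Fin.last ℓ → R.u t ∉ C.vset ∧ R.u t ≠ u) →
        (∀ t : Fin ℓ, R.f t ∉ C.eset) →
        ∀ e ∈ H.edges, e ∉ C.eset → e ∉ R.eset → u ∈ e → C.v (i + 1) ∉ e) ∧
    (∀ j : ZMod c, C.v j ∈ W → u ∈ C.e (j - 1) →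
      ∀ i : ZMod c, C.v i ∈ W → C.v i ≠ C.v j →
      ∀ (ℓ : ℕ) (R : BergePath H ℓ),
        R.u 0 = C.v i → R.u (Fin.last ℓ) = C.v j →
        (∀ t : Fin (ℓ + 1), t ≠ 0 → t ≠ Fin.last ℓ → R.u t ∉ C.vset ∧ R.u t ≠ u) →
        (∀ t : Fin ℓ, R.f t ∉ C.eset) →
        ∀ e ∈ H.edges, e ∉ C.eset → e ∉ R.eset → u ∈ e → C.v (i - 1) ∉ e) := by
  have hc : 2 ≤ c := C.hc
  haveI : NeZero c := ⟨by omega⟩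
  have memv : ∀ x : ZMod c, C.v x ∈ C.vset := by
    intro x; simp [BergeCycle.vset]
  have meme : ∀ x : ZMod c, C.e x ∈ C.eset := by
    intro x; simp [BergeCycle.eset]
  set D := C.rev with hD
  have memeD : ∀ x : ZMod c, D.e x ∈ D.eset := by
    intro x; simp [BergeCycle.eset]
  have hDv : ∀ x : ZMod c, D.v x = C.v (-x) := fun x => rfl
  have hDe : ∀ x : ZMod c, D.e x = C.e (-x - 1) := fun x => rfl
  have huD : u ∉ D.vset := by rw [hD, BergeCycle.rev_vset]; exact huC
  refine ⟨?_, ?_, ?_, ?_⟩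
  · -- part 1
    intro i j hiW hjW hui huj
    by_contra hij
    have hvij : C.v i ≠ C.v j := fun h => hij (C.v_inj h)
    obtain ⟨ℓ, R, hR0, hRl, hint, hRe⟩ := hW.2 (C.v i) hiW (C.v j) hjW hvij
    exact master C hmax u huC i j hij ℓ R hR0 hRl hint hRe (C.e i) (C.e j)
      (C.e_mem i) (C.e_mem j) (fun h => hij (C.e_inj h))
      (fun k hka _ h => hka ((C.e_inj h).symm))
      (fun k _ hkb h => hkb ((C.e_inj h).symm))
      (fun t h => hRe t (by rw [← h]; exact meme i))
      (fun t h => hRe t (by rw [← h]; exact meme j))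
      hui (C.mem_succ i) huj (C.mem_succ j)
  · -- part 2
    intro i j hiW hjW hui huj
    by_contra hij
    have hvij : C.v i ≠ C.v j := fun h => hij (C.v_inj h)
    obtain ⟨ℓ, R, hR0, hRl, hint, hRe⟩ := hW.2 (C.v i) hiW (C.v j) hjW hvij
    have hab : (-i : ZMod c) ≠ -j := fun h => hij (neg_inj.mp h)
    have hR0' : R.u 0 = D.v (-i) := by rw [hDv, neg_neg]; exact hR0
    have hRl' : R.u (Fin.last ℓ) = D.v (-j) := by rw [hDv, neg_neg]; exact hRl
    have hint' : ∀ t : Fin (ℓ + 1), t ≠ 0 → t ≠ Fin.last ℓ → R.u t ∉ D.vset ∧ R.u t ≠ u := by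
      intro t h1 h2
      rw [hD, BergeCycle.rev_vset]
      exact hint t h1 h2
    have hRe' : ∀ t : Fin ℓ, R.f t ∉ D.eset := by
      intro t
      rw [hD, BergeCycle.rev_eset]
      exact hRe t
    have hui' : u ∈ D.e (-i) := by rw [hDe, show -(-i) - 1 = i - 1 from by ring]; exact hui
    have huj' : u ∈ D.e (-j) := by rw [hDe, show -(-j) - 1 = j - 1 from by ring]; exact huj
    exact master D hmax u huD (-i) (-j) hab ℓ R hR0' hRl' hint' hRe' (D.e (-i)) (D.e (-j))
      (D.e_mem _) (D.e_mem _) (fun h => hab (D.e_inj h))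
      (fun k hka _ h => hka ((D.e_inj h).symm))
      (fun k _ hkb h => hkb ((D.e_inj h).symm))
      (fun t h => hRe' t (by rw [← h]; exact memeD (-i)))
      (fun t h => hRe' t (by rw [← h]; exact memeD (-j)))
      hui' (D.mem_succ _) huj' (D.mem_succ _)
  · -- part 3
    intro j hjW huj i hiW hne ℓ R hR0 hRl hint hRe e heH heC heR hue hmem
    have hij : i ≠ j := fun h => hne (congrArg C.v h)
    have memf : ∀ t : Fin ℓ, R.f t ∈ R.eset := by
      intro t; simp [BergePath.eset]
    exact master C hmax u huC i j hij ℓ R hR0 hRl hint hRe e (C.e j)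
      heH (C.e_mem j) (fun h => heC (by rw [h]; exact meme j))
      (fun k _ _ h => heC (by rw [h]; exact meme k))
      (fun k _ hkb h => hkb ((C.e_inj h).symm))
      (fun t h => heR (by rw [h]; exact memf t))
      (fun t h => hRe t (by rw [← h]; exact meme j))
      hue hmem huj (C.mem_succ j)
  · -- part 4
    intro j hjW huj i hiW hne ℓ R hR0 hRl hint hRe e heH heC heR hue hmem
    have hij : i ≠ j := fun h => hne (congrArg C.v h)
    have hab : (-i : ZMod c) ≠ -j := fun h => hij (neg_inj.mp h)
    have memf : ∀ t : Fin ℓ, R.f t ∈ R.eset := by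
      intro t; simp [BergePath.eset]
    have hR0' : R.u 0 = D.v (-i) := by rw [hDv, neg_neg]; exact hR0
    have hRl' : R.u (Fin.last ℓ) = D.v (-j) := by rw [hDv, neg_neg]; exact hRl
    have hint' : ∀ t : Fin (ℓ + 1), t ≠ 0 → t ≠ Fin.last ℓ → R.u t ∉ D.vset ∧ R.u t ≠ u := by
      intro t h1 h2
      rw [hD, BergeCycle.rev_vset]
      exact hint t h1 h2
    have hRe' : ∀ t : Fin ℓ, R.f t ∉ D.eset := by
      intro t
      rw [hD, BergeCycle.rev_eset]
      exact hRe t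
    have huj' : u ∈ D.e (-j) := by rw [hDe, show -(-j) - 1 = j - 1 from by ring]; exact huj
    have hv1' : D.v (-i + 1) ∈ e := by
      rw [hDv, show (-(-i + 1) : ZMod c) = i - 1 from by ring]; exact hmem
    have heCD : e ∉ D.eset := by rw [hD, BergeCycle.rev_eset]; exact heC
    exact master D hmax u huD (-i) (-j) hab ℓ R hR0' hRl' hint' hRe' e (D.e (-j))
      heH (D.e_mem _) (fun h => heCD (by rw [h]; simp [BergeCycle.eset]))
      (fun k _ _ h => heCD (by rw [h]; simp [BergeCycle.eset]))
      (fun k _ hkb h => hkb ((D.e_inj h).symm))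
      (fun t h => heR (by rw [h]; exact memf t))
      (fun t h => hRe' t (by rw [← h]; exact memeD (-j)))
      hue hv1' huj' (D.mem_succ _)
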